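/- Let $f : \mathbb{R} \to \mathbb{R}$ be continuous with $f(t) = 0$ for $t \le 0$, and suppose $t \mapsto f(t)/t$ is strictly increasing on $(0, +\infty)$. Define $F(t) = \int_0^t f(\tau)\, d\tau$. Then the function $t \mapsto f(t) t - 2 F(t)$ is strictly increasing on $(0, +\infty)$. -/

import Mathlib

open intervalIntegral in
theorem stmt_1 (f : ℝ → ℝ) (hf : Continuous f)
    (hf0 : ∀ t ≤ (0 : ℝ), f t = 0)
    (hmono : StrictMonoOn (fun t => f t / t) (Set.Ioi (0 : ℝ)))
    (F : ℝ → ℝ) (hF : ∀ t, F t = ∫ τ in (0 : ℝ)..t, f τ) :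
    StrictMonoOn (fun t => f t * t - 2 * F t) (Set.Ioi (0 : ℝ)) := by
  intro t1 h1 t2 h2 h12
  simp only [Set.mem_Ioi] at h1 h2
  set c := f t2 / t2 with hc
  have hft2 : f t2 = c * t2 := by rw [hc, div_mul_cancel₀ _ h2.ne']
  have key : f t1 * t1 < c * t1 ^ 2 := by
    have hlt : f t1 / t1 < c := hmono h1 h2 h12
    calc f t1 * t1 = (f t1 / t1) * t1 ^ 2 := by field_simp
    _ < c * t1 ^ 2 := by
        exact mul_lt_mul_of_pos_right hlt (by positivity)
  have hint : F t2 - F t1 = ∫ τ in t1..t2, f τ := by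
    rw [hF, hF, ← intervalIntegral.integral_add_adjacent_intervals
      (hf.intervalIntegrable 0 t1) (hf.intervalIntegrable t1 t2)]
    ring
  have hle : (∫ τ in t1..t2, f τ) ≤ ∫ τ in t1..t2, c * τ := by
    apply intervalIntegral.integral_mono_on h12.le (hf.intervalIntegrable _ _)
      ((continuous_const.mul continuous_id).intervalIntegrable _ _)
    intro τ hτ
    have hτ0 : 0 < τ := lt_of_lt_of_le h1 hτ.1
    rcases eq_or_lt_of_le hτ.2 with h | h
    · subst h; exact hft2.le
    · have hle' : f τ / τ ≤ c := (hmono hτ0 h2 h).le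
      calc f τ = (f τ / τ) * τ := by field_simp
      _ ≤ c * τ := mul_le_mul_of_nonneg_right hle' hτ0.le
  have hval : (∫ τ in t1..t2, c * τ) = c * (t2^2 - t1^2) / 2 := by
    rw [intervalIntegral.integral_const_mul, integral_id]; ring
  simp only
  nlinarith [hle, hval, hint, key, hft2]
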